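/- For every integer n ≥ 1, an n-chain x is perfect (i.e., s(x) = x) if and only if one of the following holds: (a) n = 4 and x = (1,2,1,0); (b) n = 4 and x = (2,0,2,0); (c) n = 5 and x = (2,1,2,0,0); (d) n ≥ 7 and x_0 = n−4, x_1 = 2, x_2 = 1, x_{n−4} = 1, and x_j = 0 for every other index j. -/

import Mathlib

/-- The counting operator: `countOp n x j` is the number of indices `i` with `x i = j`. -/
def countOp (n : ℕ) (x : Fin n → ℕ) : Fin n → ℕ :=
  fun j => (Finset.univ.filter fun i => x i = (j : ℕ)).card

lemma sum_x (n : ℕ) (x : Fin n → ℕ) (hx : ∀ i, x i < n)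
    (hp : ∀ j : Fin n, (Finset.univ.filter fun i => x i = (j:ℕ)).card = x j) :
    ∑ j : Fin n, x j = n := by
  have key : ∀ j : Fin n, x j = (Finset.univ.filter fun i => (⟨x i, hx i⟩ : Fin n) = j).card := by
    intro j
    rw [← hp j]
    congr 1
    apply Finset.filter_congr
    intro i _
    simp [Fin.ext_iff]
  calc ∑ j : Fin n, x j
      = ∑ j : Fin n, (Finset.univ.filter fun i => (⟨x i, hx i⟩ : Fin n) = j).card := by
        exact Finset.sum_congr rfl (fun j _ => key j)
    _ = (Finset.univ : Finset (Fin n)).card := by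
        rw [← Finset.card_eq_sum_card_fiberwise (fun i _ => Finset.mem_univ _)]
    _ = n := by simp

lemma sum_wx (n : ℕ) (x : Fin n → ℕ) (hx : ∀ i, x i < n)
    (hp : ∀ j : Fin n, (Finset.univ.filter fun i => x i = (j:ℕ)).card = x j) :
    ∑ j : Fin n, (j:ℕ) * x j = n := by
  calc ∑ j : Fin n, (j:ℕ) * x j
      = ∑ j : Fin n, ∑ i ∈ Finset.univ.filter (fun i => (⟨x i, hx i⟩ : Fin n) = j), x i := by
        refine Finset.sum_congr rfl (fun j _ => ?_)
        have h1 : ∀ i ∈ Finset.univ.filter (fun i => (⟨x i, hx i⟩ : Fin n) = j), x i = (j:ℕ) := by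
          intro i hi
          simp only [Finset.mem_filter, Fin.ext_iff] at hi
          exact hi.2
        rw [Finset.sum_congr rfl h1, Finset.sum_const, smul_eq_mul]
        rw [mul_comm]
        congr 1
        rw [← hp j]
        congr 1
        apply Finset.filter_congr
        intro i _
        simp [Fin.ext_iff]
    _ = ∑ i : Fin n, x i := Finset.sum_fiberwise_of_maps_to (fun i _ => Finset.mem_univ _) _
    _ = n := sum_x n x hx hp

lemma sum_eq_one_nat {α : Type*} [DecidableEq α] {s : Finset α} {f : α → ℕ}
    (h : ∑ i ∈ s, f i = 1) :
    ∃ a ∈ s, f a = 1 ∧ ∀ b ∈ s, b ≠ a → f b = 0 := by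
  obtain ⟨a, ha, hfa⟩ : ∃ a ∈ s, f a ≠ 0 := by
    by_contra hc
    push_neg at hc
    rw [Finset.sum_eq_zero hc] at h
    omega
  refine ⟨a, ha, ?_, ?_⟩
  · have := Finset.add_sum_erase s f ha
    omega
  · intro b hb hba
    have h2 := Finset.add_sum_erase s f ha
    have h3 : ∑ i ∈ s.erase a, f i = 0 := by omega
    exact Finset.sum_eq_zero_iff.mp h3 b (Finset.mem_erase.mpr ⟨hba, hb⟩)

lemma all_one_of_sum_eq_card {α : Type*} [DecidableEq α] {s : Finset α} {f : α → ℕ}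
    (h1 : ∀ b ∈ s, 1 ≤ f b) (h : ∑ i ∈ s, f i = s.card) :
    ∀ b ∈ s, f b = 1 := by
  by_contra hc
  push_neg at hc
  obtain ⟨b, hb, hfb⟩ := hc
  have h2 : 2 ≤ f b := by have := h1 b hb; omega
  have h4 := Finset.add_sum_erase s f hb
  have hle : (s.erase b).card ≤ ∑ i ∈ s.erase b, f i := by
    have := Finset.card_nsmul_le_sum (s.erase b) f 1
      (fun i hi => h1 i (Finset.mem_of_mem_erase hi))
    simpa using this
  have hcard : (s.erase b).card = s.card - 1 := Finset.card_erase_of_mem hb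
  have hpos : 1 ≤ s.card := Finset.card_pos.mpr ⟨b, hb⟩
  omega

set_option maxHeartbeats 2000000 in
lemma forward_dir (n : ℕ) (hn : 1 ≤ n) (x : Fin n → ℕ) (hx : ∀ i, x i < n)
    (hp : ∀ j : Fin n, (Finset.univ.filter fun i => x i = (j:ℕ)).card = x j) :
    ((n = 4 ∧ ∀ i : Fin n, x i = [1, 2, 1, 0].getD (i : ℕ) 0) ∨
       (n = 4 ∧ ∀ i : Fin n, x i = [2, 0, 2, 0].getD (i : ℕ) 0) ∨
       (n = 5 ∧ ∀ i : Fin n, x i = [2, 1, 2, 0, 0].getD (i : ℕ) 0) ∨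
       (7 ≤ n ∧ ∀ i : Fin n, x i =
          if (i : ℕ) = 0 then n - 4
          else if (i : ℕ) = 1 then 2
          else if (i : ℕ) = 2 then 1
          else if (i : ℕ) = n - 4 then 1
          else 0)) := by
  have h0n : 0 < n := hn
  set i0 : Fin n := ⟨0, h0n⟩ with hi0
  set k := x i0 with hkdef
  -- k ≥ 1
  have hk1 : 1 ≤ k := by
    rcases Nat.eq_zero_or_pos k with h | h
    · exfalso
      have hpz := hp i0
      have hmem : i0 ∈ Finset.univ.filter (fun i => x i = ((i0 : Fin n):ℕ)) := by
        simp [hi0, ← hkdef, h]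
        exact h
      have : 1 ≤ (Finset.univ.filter (fun i => x i = ((i0:Fin n):ℕ))).card :=
        Finset.card_pos.mpr ⟨i0, hmem⟩
      omega
    · exact h
  have hkn : k < n := hx i0
  -- zero set
  have hZcard : (Finset.univ.filter (fun j : Fin n => x j = 0)).card = k := by
    have := hp i0
    simpa [hi0] using this
  set N1 := Finset.univ.filter (fun j : Fin n => (j:ℕ) ≠ 0 ∧ x j ≠ 0) with hN1
  have hi0v : ((i0 : Fin n):ℕ) = 0 := rfl
  have hi0iff : ∀ i : Fin n, i = i0 ↔ (i:ℕ) = 0 := by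
    intro i; rw [Fin.ext_iff]
  have hsplit : (Finset.univ : Finset (Fin n)).erase i0 =
      (Finset.univ.filter (fun j : Fin n => x j = 0)) ∪ N1 := by
    ext i
    simp only [Finset.mem_erase, Finset.mem_univ, and_true, Finset.mem_union,
      Finset.mem_filter, true_and, hN1]
    constructor
    · intro h
      have h0 : (i:ℕ) ≠ 0 := fun hc => h ((hi0iff i).mpr hc)
      rcases Nat.eq_zero_or_pos (x i) with h2 | h2
      · exact Or.inl h2
      · exact Or.inr ⟨h0, by omega⟩
    · rintro (h | ⟨h, h2⟩) <;> intro hc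
      · rw [hc] at h
        rw [← hkdef] at h
        omega
      · exact h ((hi0iff i).mp hc)
  have hdisj : Disjoint (Finset.univ.filter (fun j : Fin n => x j = 0)) N1 := by
    rw [Finset.disjoint_left]
    intro a ha hb
    simp only [Finset.mem_filter, hN1] at ha hb
    exact hb.2.2 ha.2
  -- sum over N1
  have hsum_univ : ∑ j : Fin n, x j = n := sum_x n x hx hp
  have hsum_erase : ∑ j ∈ (Finset.univ : Finset (Fin n)).erase i0, x j = n - k := by
    have := Finset.add_sum_erase (Finset.univ : Finset (Fin n)) x (Finset.mem_univ i0)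
    omega
  have hZsum : ∑ j ∈ Finset.univ.filter (fun j : Fin n => x j = 0), x j = 0 :=
    Finset.sum_eq_zero (fun j hj => (Finset.mem_filter.mp hj).2)
  have hN1sum : ∑ j ∈ N1, x j = n - k := by
    rw [hsplit, Finset.sum_union hdisj, hZsum, zero_add] at hsum_erase
    exact hsum_erase
  -- cards
  have hcard_univ : (Finset.univ : Finset (Fin n)).card = n := by simp
  have hN1card : N1.card = n - 1 - k := by
    have h1 : ((Finset.univ : Finset (Fin n)).erase i0).card = n - 1 := by
      rw [Finset.card_erase_of_mem (Finset.mem_univ i0), hcard_univ]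
    rw [hsplit, Finset.card_union_of_disjoint hdisj, hZcard] at h1
    omega
  have hN1pos : ∀ j ∈ N1, 1 ≤ x j := by
    intro j hj
    have := (Finset.mem_filter.mp hj).2.2
    omega
  have hN1ne : N1.Nonempty := by
    rw [← Finset.card_pos]
    by_contra hc
    have : N1 = ∅ := by
      rw [← Finset.card_eq_zero]; omega
    rw [this, Finset.sum_empty] at hN1sum
    omega
  have hkn2 : k ≤ n - 2 := by
    have := Finset.card_pos.mpr hN1ne
    omega
  -- excess sum = 1
  have hexcess : ∑ j ∈ N1, (x j - 1) = 1 := by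
    have h1 : ∑ j ∈ N1, (x j - 1 + 1) = (∑ j ∈ N1, (x j - 1)) + N1.card := by
      rw [Finset.sum_add_distrib]; simp
    have h2 : ∑ j ∈ N1, (x j - 1 + 1) = ∑ j ∈ N1, x j :=
      Finset.sum_congr rfl (fun j hj => by have := hN1pos j hj; omega)
    omega
  obtain ⟨a, haN1, haa, hrest⟩ := sum_eq_one_nat hexcess
  have hxa : x a = 2 := by have := hN1pos a haN1; omega
  set B := N1.erase a with hBdef
  have hB1 : ∀ b ∈ B, x b = 1 := by
    intro b hb
    obtain ⟨hba, hbN1⟩ := Finset.mem_erase.mp hb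
    have := hrest b hbN1 hba
    have := hN1pos b hbN1
    omega
  have hBcard : B.card = n - k - 2 := by
    rw [hBdef, Finset.card_erase_of_mem haN1]
    omega
  -- weighted sum
  have hwsum : 2 * (a:ℕ) + ∑ b ∈ B, (b:ℕ) = n := by
    have h1 : ∑ j : Fin n, (j:ℕ) * x j = n := sum_wx n x hx hp
    have h2 : ∑ j ∈ (Finset.univ : Finset (Fin n)).erase i0, (j:ℕ) * x j = n := by
      have h3 := Finset.add_sum_erase (Finset.univ : Finset (Fin n))
        (fun j => (j:ℕ) * x j) (Finset.mem_univ i0)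
      try simp only at h3
      have h4 : ((i0:Fin n):ℕ) * x i0 = 0 := by
        have : ((i0:Fin n):ℕ) = 0 := rfl
        rw [this]; ring
      omega
    rw [hsplit, Finset.sum_union hdisj] at h2
    have h5 : ∑ j ∈ Finset.univ.filter (fun j : Fin n => x j = 0), (j:ℕ) * x j = 0 :=
      Finset.sum_eq_zero (fun j hj => by rw [(Finset.mem_filter.mp hj).2]; ring)
    rw [h5, zero_add] at h2
    have h6 : ∑ j ∈ N1, (j:ℕ) * x j = (a:ℕ) * x a + ∑ j ∈ B, (j:ℕ) * x j := by
      rw [hBdef]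
      exact (Finset.add_sum_erase N1 (fun j => (j:ℕ) * x j) haN1).symm
    have h7 : ∑ j ∈ B, (j:ℕ) * x j = ∑ j ∈ B, (j:ℕ) := by
      exact Finset.sum_congr rfl (fun j hj => by rw [hB1 j hj]; ring)
    rw [h6, h7, hxa] at h2
    omega
  -- value dichotomy
  have hval : ∀ i : Fin n, x i = 0 ∨ i = i0 ∨ i = a ∨ i ∈ B := by
    intro i
    rcases Nat.eq_zero_or_pos (x i) with h | h
    · exact Or.inl h
    · by_cases hii0 : i = i0
      · exact Or.inr (Or.inl hii0)
      · have hiN1 : i ∈ N1 := by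
          rw [hN1, Finset.mem_filter]
          exact ⟨Finset.mem_univ i, fun hc => hii0 ((hi0iff i).mpr hc), by omega⟩
        by_cases hia : i = a
        · exact Or.inr (Or.inr (Or.inl hia))
        · exact Or.inr (Or.inr (Or.inr (Finset.mem_erase.mpr ⟨hia, hiN1⟩)))
  -- indices 1, 2 exist
  have hn3 : 3 ≤ n := by omega
  set i1 : Fin n := ⟨1, by omega⟩ with hi1
  set i2 : Fin n := ⟨2, by omega⟩ with hi2
  have hi1v : ((i1 : Fin n):ℕ) = 1 := rfl
  have hi2v : ((i2 : Fin n):ℕ) = 2 := rfl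
  have hi0B : i0 ∉ B := by
    intro hc
    have := (Finset.mem_filter.mp (Finset.mem_erase.mp hc).2).2.1
    exact this rfl
  have haB : a ∉ B := Finset.notMem_erase a N1
  have havne : (a:ℕ) ≠ 0 := (Finset.mem_filter.mp haN1).2.1
  -- count of value 1
  have hx1 : x i1 = B.card + (if k = 1 then 1 else 0) := by
    rw [← hp i1]
    have hfe : Finset.univ.filter (fun i => x i = ((i1:Fin n):ℕ)) =
        if k = 1 then insert i0 B else B := by
      ext i
      rw [Finset.mem_filter, hi1v]
      constructor
      · rintro ⟨-, hxi⟩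
        rcases hval i with h | h | h | h
        · omega
        · subst h
          have : k = 1 := by omega
          simp [this]
        · subst h; omega
        · split <;> simp [h]
      · intro hi
        refine ⟨Finset.mem_univ i, ?_⟩
        by_cases hk : k = 1
        · rw [if_pos hk, Finset.mem_insert] at hi
          rcases hi with h | h
          · subst h; omega
          · exact hB1 i h
        · rw [if_neg hk] at hi
          exact hB1 i hi
    rw [hfe]
    by_cases hk : k = 1
    · rw [if_pos hk, if_pos hk, Finset.card_insert_of_notMem hi0B]
    · rw [if_neg hk, if_neg hk]; omega
  -- count of value 2
  have hx2 : x i2 = 1 + (if k = 2 then 1 else 0) := by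
    rw [← hp i2]
    have hfe : Finset.univ.filter (fun i => x i = ((i2:Fin n):ℕ)) =
        if k = 2 then insert i0 {a} else {a} := by
      ext i
      rw [Finset.mem_filter, hi2v]
      constructor
      · rintro ⟨-, hxi⟩
        rcases hval i with h | h | h | h
        · omega
        · subst h
          have : k = 2 := by omega
          simp [this]
        · subst h; split <;> simp
        · have := hB1 i h; omega
      · intro hi
        refine ⟨Finset.mem_univ i, ?_⟩
        by_cases hk : k = 2
        · rw [if_pos hk, Finset.mem_insert, Finset.mem_singleton] at hi
          rcases hi with h | h
          · subst h; omega
          · subst h; omega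
        · rw [if_neg hk, Finset.mem_singleton] at hi
          subst hi; omega
    rw [hfe]
    have hi0a : i0 ≠ a := by
      intro hc; apply havne; rw [← hc]
    by_cases hk : k = 2
    · have hi0m : i0 ∉ ({a} : Finset (Fin n)) := by simp [hi0a]
      rw [if_pos hk, if_pos hk, Finset.card_insert_of_notMem hi0m]
      simp
    · rw [if_neg hk, if_neg hk, Finset.card_singleton]
  -- case analysis on k
  by_cases hke1 : k = 1
  · -- k = 1
    have hx1' : x i1 = n - 2 := by rw [hx1, if_pos hke1]; omega
    have hx1ne : x i1 ≠ 0 := by omega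
    have hn34 : n = 3 ∨ n = 4 := by
      have hle : x i1 ≤ 2 := by
        rcases hval i1 with h | h | h | h
        · omega
        · exfalso; have : (1:ℕ) = 0 := congrArg Fin.val h; omega
        · rw [h, hxa]
        · rw [hB1 i1 h]; omega
      omega
    rcases hn34 with hn4 | hn4
    · -- n = 3 : contradiction
      exfalso
      have hBe : B = ∅ := by rw [← Finset.card_eq_zero]; omega
      have : x i1 = 1 := by omega
      rcases hval i1 with h | h | h | h
      · omega
      · have : (1:ℕ) = 0 := congrArg Fin.val h; omega
      · rw [h, hxa] at this; omega
      · rw [hBe] at h; exact absurd h (Finset.notMem_empty i1)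
    · -- n = 4
      left
      refine ⟨hn4, fun i => ?_⟩
      have hai1 : a = i1 := by
        have hx12 : x i1 = 2 := by omega
        rcases hval i1 with h | h | h | h
        · omega
        · exfalso; have : (1:ℕ) = 0 := congrArg Fin.val h; omega
        · exact h.symm
        · exfalso; rw [hB1 i1 h] at hx12; omega
      have hav1 : (a:ℕ) = 1 := by rw [hai1]
      obtain ⟨b, hBeq⟩ : ∃ b, B = {b} := Finset.card_eq_one.mp (by omega)
      have hbv : (b:ℕ) = 2 := by
        have := hwsum
        rw [hBeq, Finset.sum_singleton, hav1] at this
        omega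
      have hiv : (i:ℕ) = 0 ∨ (i:ℕ) = 1 ∨ (i:ℕ) = 2 ∨ (i:ℕ) = 3 := by
        have := i.isLt; omega
      rcases hiv with h | h | h | h
      · rw [h]
        show x i = 1
        rw [show i = i0 from Fin.ext h]
        omega
      · rw [h]
        show x i = 2
        rw [show i = a from Fin.ext (by rw [h, hav1])]
        exact hxa
      · rw [h]
        show x i = 1
        have hib : i = b := Fin.ext (by rw [h, hbv])
        rw [hib]
        exact hB1 b (by rw [hBeq]; exact Finset.mem_singleton_self b)
      · rw [h]
        show x i = 0
        rcases hval i with h2 | h2 | h2 | h2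
        · exact h2
        · exfalso; have : (i:ℕ) = 0 := congrArg Fin.val h2; omega
        · exfalso; have : (i:ℕ) = (a:ℕ) := congrArg Fin.val h2; omega
        · exfalso
          rw [hBeq, Finset.mem_singleton] at h2
          have : (i:ℕ) = (b:ℕ) := congrArg Fin.val h2; omega
  · by_cases hke2 : k = 2
    · -- k = 2
      have hx2' : x i2 = 2 := by rw [hx2, if_pos hke2]
      have hai2 : a = i2 := by
        rcases hval i2 with h | h | h | h
        · omega
        · exfalso; have : (2:ℕ) = 0 := congrArg Fin.val h; omega
        · exact h.symm
        · exfalso; rw [hB1 i2 h] at hx2'; omega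
      have hav2 : (a:ℕ) = 2 := by rw [hai2]
      have hsumB : ∑ b ∈ B, (b:ℕ) = n - 4 := by rw [hav2] at hwsum; omega
      have hn4le : 4 ≤ n := by rw [hav2] at hwsum; omega
      have hBcard' : B.card = n - 4 := by rw [hBcard]; omega
      have hBval1 : ∀ b ∈ B, (b:ℕ) = 1 := by
        have hge : ∀ b ∈ B, 1 ≤ (b:ℕ) := by
          intro b hb
          have := (Finset.mem_filter.mp (Finset.mem_erase.mp hb).2).2.1
          omega
        exact all_one_of_sum_eq_card hge (by omega)
      have hBsub : B ⊆ {i1} := by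
        intro b hb
        rw [Finset.mem_singleton]
        exact Fin.ext (by rw [hBval1 b hb])
      have hBle1 : B.card ≤ 1 := by
        have := Finset.card_le_card hBsub
        simpa using this
      have hn45 : n = 4 ∨ n = 5 := by omega
      rcases hn45 with hn4 | hn4
      · -- n = 4, x = (2,0,2,0)
        right; left
        refine ⟨hn4, fun i => ?_⟩
        have hBe : B = ∅ := by rw [← Finset.card_eq_zero]; omega
        have hiv : (i:ℕ) = 0 ∨ (i:ℕ) = 1 ∨ (i:ℕ) = 2 ∨ (i:ℕ) = 3 := by
          have := i.isLt; omega
        have hzero : ∀ j : Fin n, (j:ℕ) ≠ 0 → (j:ℕ) ≠ 2 → x j = 0 := by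
          intro j hj0 hj2
          rcases hval j with h | h | h | h
          · exact h
          · exfalso; exact hj0 (congrArg Fin.val h)
          · exfalso; apply hj2; rw [← hav2]; exact congrArg Fin.val h
          · exfalso; rw [hBe] at h; exact Finset.notMem_empty j h
        rcases hiv with h | h | h | h
        · rw [h]; show x i = 2
          rw [show i = i0 from Fin.ext h]; omega
        · rw [h]; show x i = 0
          exact hzero i (by omega) (by omega)
        · rw [h]; show x i = 2
          rw [show i = a from Fin.ext (by rw [h, hav2])]; exact hxa
        · rw [h]; show x i = 0
          exact hzero i (by omega) (by omega)
      · -- n = 5, x = (2,1,2,0,0)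
        right; right; left
        refine ⟨hn4, fun i => ?_⟩
        have hBcard1 : B.card = 1 := by omega
        obtain ⟨b, hBeq⟩ := Finset.card_eq_one.mp hBcard1
        have hbv : (b:ℕ) = 1 := hBval1 b (by rw [hBeq]; exact Finset.mem_singleton_self b)
        have hiv : (i:ℕ) = 0 ∨ (i:ℕ) = 1 ∨ (i:ℕ) = 2 ∨ (i:ℕ) = 3 ∨ (i:ℕ) = 4 := by
          have := i.isLt; omega
        have hzero : ∀ j : Fin n, (j:ℕ) ≠ 0 → (j:ℕ) ≠ 1 → (j:ℕ) ≠ 2 → x j = 0 := by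
          intro j hj0 hj1 hj2
          rcases hval j with h | h | h | h
          · exact h
          · exfalso; exact hj0 (congrArg Fin.val h)
          · exfalso; apply hj2; rw [← hav2]; exact congrArg Fin.val h
          · exfalso; apply hj1
            rw [hBeq, Finset.mem_singleton] at h
            rw [← hbv]; exact congrArg Fin.val h
        rcases hiv with h | h | h | h | h
        · rw [h]; show x i = 2
          rw [show i = i0 from Fin.ext h]; omega
        · rw [h]; show x i = 1
          rw [show i = b from Fin.ext (by rw [h, hbv])]
          exact hB1 b (by rw [hBeq]; exact Finset.mem_singleton_self b)
        · rw [h]; show x i = 2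
          rw [show i = a from Fin.ext (by rw [h, hav2])]; exact hxa
        · rw [h]; show x i = 0
          exact hzero i (by omega) (by omega) (by omega)
        · rw [h]; show x i = 0
          exact hzero i (by omega) (by omega) (by omega)
    · -- k ≥ 3
      have hk3 : 3 ≤ k := by omega
      obtain ⟨ik, hikv⟩ : ∃ ik : Fin n, (ik:ℕ) = k := ⟨⟨k, hkn⟩, rfl⟩
      have hxik : x ik = 1 := by
        rw [← hp ik]
        have hfe : Finset.univ.filter (fun i => x i = ((ik:Fin n):ℕ)) = {i0} := by
          ext i
          rw [Finset.mem_filter, hikv, Finset.mem_singleton]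
          constructor
          · rintro ⟨-, hxi⟩
            rcases hval i with h | h | h | h
            · omega
            · exact h
            · exfalso; rw [h, hxa] at hxi; omega
            · exfalso; rw [hB1 i h] at hxi; omega
          · intro h
            subst h
            exact ⟨Finset.mem_univ _, by omega⟩
        rw [hfe, Finset.card_singleton]
      have hikB : ik ∈ B := by
        rcases hval ik with h | h | h | h
        · omega
        · exfalso
          have h4 : (ik:ℕ) = (i0:ℕ) := congrArg Fin.val h
          rw [hikv, hi0v] at h4; omega
        · exfalso; rw [h, hxa] at hxik; omega
        · exact h
      have hx2' : x i2 = 1 := by rw [hx2, if_neg hke2]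
      have hi2B : i2 ∈ B := by
        rcases hval i2 with h | h | h | h
        · omega
        · exfalso; have : (2:ℕ) = 0 := congrArg Fin.val h; omega
        · exfalso; rw [h, hxa] at hx2'; omega
        · exact h
      have hi2ik : i2 ≠ ik := by
        intro hc
        have h4 : (i2:ℕ) = (ik:ℕ) := congrArg Fin.val hc
        rw [hikv, hi2v] at h4; omega
      have hpairsub : ({i2, ik} : Finset (Fin n)) ⊆ B := by
        intro j hj
        rcases Finset.mem_insert.mp hj with h | h
        · subst h; exact hi2B
        · rw [Finset.mem_singleton] at h; subst h; exact hikB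
      have hpaircard : ({i2, ik} : Finset (Fin n)).card = 2 := by
        rw [Finset.card_insert_of_notMem (by simpa using hi2ik), Finset.card_singleton]
      have hB2 : 2 ≤ B.card := by
        have := Finset.card_le_card hpairsub
        omega
      have hx1' : x i1 = B.card := by rw [hx1, if_neg hke1]; omega
      have hai1 : a = i1 := by
        rcases hval i1 with h | h | h | h
        · omega
        · exfalso; have : (1:ℕ) = 0 := congrArg Fin.val h; omega
        · exact h.symm
        · exfalso; rw [hB1 i1 h] at hx1'; omega
      have hav1 : (a:ℕ) = 1 := by rw [hai1]
      have hx1a : x i1 = 2 := by rw [← hai1]; exact hxa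
      have hkn4 : k = n - 4 := by
        have : B.card = 2 := by omega
        omega
      have hn7 : 7 ≤ n := by omega
      have hBeq : ({i2, ik} : Finset (Fin n)) = B :=
        Finset.eq_of_subset_of_card_le hpairsub (by omega)
      right; right; right
      refine ⟨hn7, fun i => ?_⟩
      have hiv : (i:ℕ) = 0 ∨ (i:ℕ) = 1 ∨ (i:ℕ) = 2 ∨ (i:ℕ) = n - 4 ∨
          ((i:ℕ) ≠ 0 ∧ (i:ℕ) ≠ 1 ∧ (i:ℕ) ≠ 2 ∧ (i:ℕ) ≠ n - 4) := by omega
      rcases hiv with h | h | h | h | h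
      · rw [if_pos h]
        rw [show i = i0 from Fin.ext h]
        omega
      · rw [if_neg (by omega), if_pos h]
        rw [show i = a from Fin.ext (by rw [h, hav1])]
        exact hxa
      · rw [if_neg (by omega), if_neg (by omega), if_pos h]
        rw [show i = i2 from Fin.ext h]
        exact hx2'
      · rw [if_neg (by omega), if_neg (by omega), if_neg (by omega), if_pos h]
        rw [show i = ik from Fin.ext (by rw [h, hikv]; omega)]
        exact hxik
      · rw [if_neg (by omega), if_neg (by omega), if_neg (by omega), if_neg (by omega)]
        rcases hval i with h2 | h2 | h2 | h2
        · exact h2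
        · exfalso; have : (i:ℕ) = 0 := congrArg Fin.val h2; omega
        · exfalso; have : (i:ℕ) = (a:ℕ) := congrArg Fin.val h2; omega
        · exfalso
          rw [← hBeq] at h2
          rcases Finset.mem_insert.mp h2 with h3 | h3
          · have : (i:ℕ) = 2 := congrArg Fin.val h3; omega
          · rw [Finset.mem_singleton] at h3
            have h4 : (i:ℕ) = (ik:ℕ) := congrArg Fin.val h3
            rw [hikv] at h4; omega

set_option maxHeartbeats 1000000 in
lemma back_d (n : ℕ) (hn7 : 7 ≤ n) (x : Fin n → ℕ)
    (h : ∀ i : Fin n, x i = if (i:ℕ) = 0 then n - 4 else if (i:ℕ) = 1 then 2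
      else if (i:ℕ) = 2 then 1 else if (i:ℕ) = n - 4 then 1 else 0) :
    countOp n x = x := by
  funext j
  show (Finset.univ.filter fun i => x i = (j:ℕ)).card = x j
  have h0n : (0:ℕ) < n := by omega
  have h1n : (1:ℕ) < n := by omega
  have h2n : (2:ℕ) < n := by omega
  have h4n : n - 4 < n := by omega
  have hv0 : ((⟨0, h0n⟩ : Fin n):ℕ) = 0 := rfl
  have hv1 : ((⟨1, h1n⟩ : Fin n):ℕ) = 1 := rfl
  have hv2 : ((⟨2, h2n⟩ : Fin n):ℕ) = 2 := rfl
  have hv4 : ((⟨n-4, h4n⟩ : Fin n):ℕ) = n - 4 := rfl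
  rw [h j]
  have hcases : (j:ℕ) = 0 ∨ (j:ℕ) = 1 ∨ (j:ℕ) = 2 ∨ (j:ℕ) = n - 4 ∨
      ((j:ℕ) ≠ 0 ∧ (j:ℕ) ≠ 1 ∧ (j:ℕ) ≠ 2 ∧ (j:ℕ) ≠ n - 4) := by omega
  rcases hcases with hc | hc | hc | hc | hc
  · -- value 0, count n - 4
    rw [hc, if_pos rfl]
    have hfe : Finset.univ.filter (fun i : Fin n => x i = 0) =
        Finset.univ \ {⟨0, h0n⟩, ⟨1, h1n⟩, ⟨2, h2n⟩, ⟨n-4, h4n⟩} := by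
      ext i
      simp only [Finset.mem_filter, Finset.mem_univ, true_and, Finset.mem_sdiff,
        Finset.mem_insert, Finset.mem_singleton, Fin.ext_iff, Fin.val_mk, h i]
      split_ifs <;> first | omega | (simp only [false_iff, true_iff, iff_false, iff_true, not_or, not_not, not_true, not_false_iff]; omega)
    rw [hfe, Finset.card_sdiff_of_subset (Finset.subset_univ _)]
    have hcard4 : ({⟨0, h0n⟩, ⟨1, h1n⟩, ⟨2, h2n⟩, ⟨n-4, h4n⟩} : Finset (Fin n)).card = 4 := by
      rw [Finset.card_insert_of_notMem (by simp only [Finset.mem_insert, Finset.mem_singleton, Fin.ext_iff, Fin.val_mk]; omega),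
        Finset.card_insert_of_notMem (by simp only [Finset.mem_insert, Finset.mem_singleton, Fin.ext_iff, Fin.val_mk]; omega),
        Finset.card_insert_of_notMem (by simp only [Finset.mem_insert, Finset.mem_singleton, Fin.ext_iff, Fin.val_mk]; omega),
        Finset.card_singleton]
    rw [hcard4]
    simp
  · -- value 1, count 2
    rw [hc, if_neg (by omega), if_pos rfl]
    have hfe : Finset.univ.filter (fun i : Fin n => x i = 1) =
        ({⟨2, h2n⟩, ⟨n-4, h4n⟩} : Finset (Fin n)) := by
      ext i
      simp only [Finset.mem_filter, Finset.mem_univ, true_and,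
        Finset.mem_insert, Finset.mem_singleton, Fin.ext_iff, Fin.val_mk, h i]
      split_ifs <;> first | omega | (simp only [false_iff, true_iff, iff_false, iff_true, not_or, not_not, not_true, not_false_iff]; omega)
    rw [hfe, Finset.card_insert_of_notMem (by simp only [Finset.mem_insert, Finset.mem_singleton, Fin.ext_iff, Fin.val_mk]; omega),
      Finset.card_singleton]
  · -- value 2, count 1
    rw [hc, if_neg (by omega), if_neg (by omega), if_pos rfl]
    have hfe : Finset.univ.filter (fun i : Fin n => x i = 2) =
        ({⟨1, h1n⟩} : Finset (Fin n)) := by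
      ext i
      simp only [Finset.mem_filter, Finset.mem_univ, true_and,
        Finset.mem_singleton, Fin.ext_iff, Fin.val_mk, h i]
      split_ifs <;> first | omega | (simp only [false_iff, true_iff, iff_false, iff_true, not_or, not_not, not_true, not_false_iff]; omega)
    rw [hfe, Finset.card_singleton]
  · -- value n - 4, count 1
    rw [hc, if_neg (by omega), if_neg (by omega), if_neg (by omega), if_pos rfl]
    have hfe : Finset.univ.filter (fun i : Fin n => x i = n - 4) =
        ({⟨0, h0n⟩} : Finset (Fin n)) := by
      ext i
      simp only [Finset.mem_filter, Finset.mem_univ, true_and,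
        Finset.mem_singleton, Fin.ext_iff, Fin.val_mk, h i]
      split_ifs <;> first | omega | (simp only [false_iff, true_iff, iff_false, iff_true, not_or, not_not, not_true, not_false_iff]; omega)
    rw [hfe, Finset.card_singleton]
  · -- other values, count 0
    rw [if_neg hc.1, if_neg hc.2.1, if_neg hc.2.2.1, if_neg hc.2.2.2]
    rw [Finset.card_eq_zero]
    rw [Finset.filter_eq_empty_iff]
    intro i _
    rw [h i]
    split_ifs <;> first | omega | (simp only [false_iff, true_iff, iff_false, iff_true, not_or, not_not, not_true, not_false_iff]; omega)


theorem perfect_chains_classification (n : ℕ) (hn : 1 ≤ n) (x : Fin n → ℕ)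
    (hx : ∀ i, x i < n) :
    countOp n x = x ↔
      ((n = 4 ∧ ∀ i : Fin n, x i = [1, 2, 1, 0].getD (i : ℕ) 0) ∨
       (n = 4 ∧ ∀ i : Fin n, x i = [2, 0, 2, 0].getD (i : ℕ) 0) ∨
       (n = 5 ∧ ∀ i : Fin n, x i = [2, 1, 2, 0, 0].getD (i : ℕ) 0) ∨
       (7 ≤ n ∧ ∀ i : Fin n, x i =
          if (i : ℕ) = 0 then n - 4
          else if (i : ℕ) = 1 then 2
          else if (i : ℕ) = 2 then 1
          else if (i : ℕ) = n - 4 then 1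
          else 0)) := by
  constructor
  · intro h
    have hp : ∀ j : Fin n, (Finset.univ.filter fun i => x i = (j:ℕ)).card = x j :=
      fun j => congrFun h j
    exact forward_dir n hn x hx hp
  · rintro (⟨hn4, hh⟩ | ⟨hn4, hh⟩ | ⟨hn5, hh⟩ | ⟨hn7, hh⟩)
    · subst hn4
      have hxe : x = fun i : Fin 4 => [1,2,1,0].getD (i:ℕ) 0 := by funext i; exact hh i
      subst hxe
      decide
    · subst hn4
      have hxe : x = fun i : Fin 4 => [2,0,2,0].getD (i:ℕ) 0 := by funext i; exact hh i
      subst hxe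
      decide
    · subst hn5
      have hxe : x = fun i : Fin 5 => [2,1,2,0,0].getD (i:ℕ) 0 := by funext i; exact hh i
      subst hxe
      decide
    · exact back_d n hn7 x hh
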